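/- Let (A,d,⟨·,·⟩) be a cochain complex with pairing. If the degenerate subspace A_deg ⊆ A is an acyclic subcomplex and the nondegenerate quotient Q(A) is of finite type, then A is of Hodge type. -/

import Mathlib

noncomputable section

/-- A cochain complex over `ℝ` (with a `ℤ`-grading realized as an internal direct sum
of submodules) together with a graded-symmetric pairing of degree `n` compatible with
the differential. -/
structure PairedComplex (A : Type*) [AddCommGroup A] [Module ℝ A] where
  /-- the grading `A = ⊕ᵢ Aⁱ` -/
  grading : ℤ → Submodule ℝ A
  internal : DirectSum.IsInternal grading
  /-- the differential -/
  d : A →ₗ[ℝ] A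
  d_degree : ∀ i : ℤ, ∀ x ∈ grading i, d x ∈ grading (i + 1)
  d_sq : ∀ x : A, d (d x) = 0
  /-- the degree of the pairing -/
  n : ℤ
  /-- the pairing -/
  pair : A →ₗ[ℝ] A →ₗ[ℝ] ℝ
  pair_degree : ∀ i j : ℤ, i + j ≠ n → ∀ x ∈ grading i, ∀ y ∈ grading j, pair x y = 0
  pair_symm : ∀ i j : ℤ, ∀ x ∈ grading i, ∀ y ∈ grading j,
      pair x y = (-1 : ℝ) ^ (i * j) * pair y x
  pair_d : ∀ i : ℤ, ∀ x ∈ grading i, ∀ y : A,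
      pair (d x) y = (-1 : ℝ) ^ (1 + i) * pair x (d y)

namespace PairedComplex

variable {A : Type*} [AddCommGroup A] [Module ℝ A] (X : PairedComplex A)

/-- `f` is homogeneous of degree `k`. -/
def IsDegree (f : A →ₗ[ℝ] A) (k : ℤ) : Prop :=
  ∀ i : ℤ, ∀ x ∈ X.grading i, f x ∈ X.grading (i + k)

/-- A chain map: a degree `0` map commuting with the differential. -/
def IsChainMap (f : A →ₗ[ℝ] A) : Prop :=
  X.IsDegree f 0 ∧ ∀ x : A, f (X.d x) = X.d (f x)

/-- A projection: an idempotent chain map. -/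
def IsProjection (p : A →ₗ[ℝ] A) : Prop :=
  X.IsChainMap p ∧ ∀ x : A, p (p x) = p x

/-- The projection `π_P = id + d∘P + P∘d` associated to a homotopy operator `P`. -/
def assocProj (P : A →ₗ[ℝ] A) : A →ₗ[ℝ] A :=
  LinearMap.id + X.d ∘ₗ P + P ∘ₗ X.d

/-- A homotopy operator: a degree `-1` map such that `−d∘P − P∘d` is a projection. -/
def IsHomotopyOperator (P : A →ₗ[ℝ] A) : Prop :=
  X.IsDegree P (-1) ∧ X.IsProjection (-(X.d ∘ₗ P) - P ∘ₗ X.d)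

/-- A homotopy operator `P` is special if `P∘P = 0` and `P∘d∘P = −P`. -/
def IsSpecial (P : A →ₗ[ℝ] A) : Prop :=
  (∀ x : A, P (P x) = 0) ∧ ∀ x : A, P (X.d (P x)) = -(P x)

/-- The symmetry property `⟨Px,y⟩ = (−1)^{deg x} ⟨x,Py⟩` of a propagator. -/
def IsSymmetricDeg (P : A →ₗ[ℝ] A) : Prop :=
  ∀ i : ℤ, ∀ x ∈ X.grading i, ∀ y : A,
    X.pair (P x) y = (-1 : ℝ) ^ i * X.pair x (P y)

/-- A propagator: a homotopy operator satisfying the symmetry property. -/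
def IsPropagator (P : A →ₗ[ℝ] A) : Prop :=
  X.IsHomotopyOperator P ∧ X.IsSymmetricDeg P

/-- A symmetric operator: `⟨px,y⟩ = ⟨x,py⟩`. -/
def IsSymmetric (p : A →ₗ[ℝ] A) : Prop :=
  ∀ x y : A, X.pair (p x) y = X.pair x (p y)

/-- Nondegeneracy of the pairing. -/
def Nondegenerate : Prop :=
  ∀ x : A, (∀ y : A, X.pair x y = 0) → x = 0

/-- The pairing is perfect: the musical map `x ↦ ⟨x,·⟩` is an isomorphism onto the
graded dual, i.e. it is injective and every linear functional on `A^{n-i}` is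
represented by an element of `A^i`. -/
def Perfect : Prop :=
  X.Nondegenerate ∧
    ∀ i : ℤ, ∀ φ : ↥(X.grading (X.n - i)) →ₗ[ℝ] ℝ,
      ∃ x ∈ X.grading i, ∀ y : ↥(X.grading (X.n - i)), X.pair x (y : A) = φ y

/-- A chain map induces an isomorphism on cohomology (elementwise formulation). -/
def IsQuasiIso (f : A →ₗ[ℝ] A) : Prop :=
  (∀ x : A, X.d x = 0 → ∃ y : A, X.d y = 0 ∧ ∃ z : A, f y - x = X.d z) ∧
  (∀ y : A, X.d y = 0 → (∃ z : A, f y = X.d z) → ∃ w : A, y = X.d w)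

/-- A graded subspace: spanned by its homogeneous elements. -/
def IsGradedSubspace (B : Submodule ℝ A) : Prop :=
  ∀ x ∈ B, x ∈ ⨆ i : ℤ, B ⊓ X.grading i

/-- A subcomplex: a graded subspace preserved by the differential. -/
def IsSubcomplex (B : Submodule ℝ A) : Prop :=
  X.IsGradedSubspace B ∧ ∀ x ∈ B, X.d x ∈ B

/-- The inclusion `B ↪ A` is a quasi-isomorphism (elementwise formulation). -/
def InclQuasiIso (B : Submodule ℝ A) : Prop :=
  (∀ x : A, X.d x = 0 → ∃ b ∈ B, X.d b = 0 ∧ ∃ z : A, x - b = X.d z) ∧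
  (∀ b ∈ B, X.d b = 0 → (∃ z : A, b = X.d z) → ∃ c ∈ B, b = X.d c)

/-- The restriction of the pairing to `B` is perfect. -/
def SubPerfect (B : Submodule ℝ A) : Prop :=
  (∀ x ∈ B, (∀ y ∈ B, X.pair x y = 0) → x = 0) ∧
    ∀ i : ℤ, ∀ φ : ↥(B ⊓ X.grading (X.n - i)) →ₗ[ℝ] ℝ,
      ∃ x ∈ B ⊓ X.grading i, ∀ y : ↥(B ⊓ X.grading (X.n - i)), X.pair x (y : A) = φ y

/-- The orthogonal complement `B^⊥ = {x | ⟨x,b⟩ = 0 ∀ b ∈ B}`. -/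
def perp (B : Submodule ℝ A) : Submodule ℝ A where
  carrier := {x : A | ∀ b ∈ B, X.pair x b = 0}
  add_mem' := by
    intro x y hx hy
    intro b hb
    have hx' := hx b hb
    have hy' := hy b hb
    simp only [map_add, LinearMap.add_apply, hx', hy', add_zero]
  zero_mem' := by
    intro b hb
    simp
  smul_mem' := by
    intro c x hx b hb
    have hx' := hx b hb
    simp only [map_smul, LinearMap.smul_apply, hx', smul_zero]

/-- A harmonic subspace: a graded subspace `H` with `ker d = H ⊕ im d`. -/
def IsHarmonic (H : Submodule ℝ A) : Prop :=
  X.IsGradedSubspace H ∧ H ≤ LinearMap.ker X.d ∧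
    H ⊓ LinearMap.range X.d = ⊥ ∧ H ⊔ LinearMap.range X.d = LinearMap.ker X.d

/-- A Hodge decomposition `B = H ⊕ d(B) ⊕ C` of a subcomplex `B ⊆ A` (with respect to
the restricted pairing); taking `B = ⊤` gives a Hodge decomposition of `A`. -/
def IsHodgeOn (B H C : Submodule ℝ A) : Prop :=
  H ≤ B ∧ C ≤ B ∧ X.IsGradedSubspace H ∧ X.IsGradedSubspace C ∧
  H ≤ LinearMap.ker X.d ∧
  H ⊓ Submodule.map X.d B = ⊥ ∧
  H ⊔ Submodule.map X.d B = LinearMap.ker X.d ⊓ B ∧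
  C ⊓ LinearMap.ker X.d = ⊥ ∧
  C ⊔ (LinearMap.ker X.d ⊓ B) = B ∧
  (∀ c ∈ C, ∀ c' ∈ C, X.pair c c' = 0) ∧
  (∀ c ∈ C, ∀ h ∈ H, X.pair c h = 0)

/-- A Hodge decomposition `A = H ⊕ im d ⊕ C` of the full complex. -/
def IsHodge (H C : Submodule ℝ A) : Prop :=
  X.IsHodgeOn ⊤ H C

/-- `A` is of Hodge type if it admits a Hodge decomposition. -/
def IsHodgeType : Prop :=
  ∃ H C : Submodule ℝ A, X.IsHodge H C

/-- The operator `P_{H,C}` canonically associated to a Hodge decomposition `(H,C)`: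
`P(dy) = −y` for `y ∈ C`, and `P = 0` on `H ⊕ C`. -/
def IsHodgeOperator (H C : Submodule ℝ A) (P : A →ₗ[ℝ] A) : Prop :=
  (∀ y ∈ C, P (X.d y) = -y) ∧ (∀ x ∈ H, P x = 0) ∧ ∀ x ∈ C, P x = 0

/-- The degenerate subspace `A_deg = {a | ⟨a,x⟩ = 0 ∀ x}`. -/
def degSub : Submodule ℝ A := X.perp ⊤

/-- The induced pairing on cohomology is nondegenerate (elementwise formulation). -/
def CohomNondeg : Prop :=
  ∀ x : A, X.d x = 0 → (∀ y : A, X.d y = 0 → X.pair x y = 0) → ∃ z : A, x = X.d z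

/-- The induced pairing on cohomology is perfect (elementwise formulation). -/
def CohomPerfect : Prop :=
  X.CohomNondeg ∧
    ∀ i : ℤ, ∀ φ : ↥(LinearMap.ker X.d ⊓ X.grading (X.n - i)) →ₗ[ℝ] ℝ,
      (∀ y : ↥(LinearMap.ker X.d ⊓ X.grading (X.n - i)),
          (∃ z : A, (y : A) = X.d z) → φ y = 0) →
      ∃ x ∈ LinearMap.ker X.d ⊓ X.grading i,
        ∀ y : ↥(LinearMap.ker X.d ⊓ X.grading (X.n - i)), X.pair x (y : A) = φ y

end PairedComplex

namespace PairedComplex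

variable {A : Type*} [AddCommGroup A] [Module ℝ A] (X : PairedComplex A)

/-- A realization of the nondegenerate quotient `Q(A) = A / A_deg`:
a surjective chain map with kernel `A_deg` preserving pairings, gradings and degree. -/
def IsQuotientMap {B : Type*} [AddCommGroup B] [Module ℝ B]
    (Y : PairedComplex B) (q : A →ₗ[ℝ] B) : Prop :=
  Function.Surjective q ∧
  LinearMap.ker q = X.degSub ∧
  (∀ x : A, q (X.d x) = Y.d (q x)) ∧
  (∀ x y : A, Y.pair (q x) (q y) = X.pair x y) ∧
  (∀ i : ℤ, ∀ x ∈ X.grading i, q x ∈ Y.grading i) ∧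
  Y.n = X.n

/-- A Hodge star on a nonnegatively graded cochain complex with pairing of degree `n`:
a degree-reversing involution (up to sign) such that `(x,y) := ⟨x,⋆y⟩` is a positive
definite inner product. -/
def IsHodgeStar (star : A →ₗ[ℝ] A) : Prop :=
  (∀ i : ℤ, ∀ x ∈ X.grading i, star x ∈ X.grading (X.n - i)) ∧
  (∀ i : ℤ, ∀ x ∈ X.grading i, star (star x) = ((-1 : ℝ) ^ (i * (X.n - i))) • x) ∧
  (∀ x y : A, X.pair x (star y) = X.pair y (star x)) ∧
  (∀ x : A, x ≠ 0 → 0 < X.pair x (star x))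

end PairedComplex

/-- A differential graded algebra with pairing: a `PairedComplex` together with an
associative product of degree `0` satisfying the Leibniz rule and compatible with the
pairing. -/
structure PairedDGA (A : Type*) [AddCommGroup A] [Module ℝ A] extends
    PairedComplex A where
  /-- the product -/
  mul : A →ₗ[ℝ] A →ₗ[ℝ] A
  mul_degree : ∀ i j : ℤ, ∀ x ∈ grading i, ∀ y ∈ grading j, mul x y ∈ grading (i + j)
  mul_assoc' : ∀ x y z : A, mul (mul x y) z = mul x (mul y z)
  leibniz : ∀ i : ℤ, ∀ x ∈ grading i, ∀ y : A,
      d (mul x y) = mul (d x) y + ((-1 : ℝ) ^ i) • mul x (d y)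
  pair_mul : ∀ x y z : A, pair (mul x y) z = pair x (mul y z)

namespace PairedDGA

variable {A : Type*} [AddCommGroup A] [Module ℝ A] (Y : PairedDGA A)

/-- `one` is a unit for the product. -/
def IsUnit (one : A) : Prop :=
  one ≠ 0 ∧ one ∈ Y.grading 0 ∧ ∀ x : A, Y.mul one x = x ∧ Y.mul x one = x

/-- graded commutativity. -/
def IsCommutative : Prop :=
  ∀ i j : ℤ, ∀ x ∈ Y.grading i, ∀ y ∈ Y.grading j,
    Y.mul x y = ((-1 : ℝ) ^ (i * j)) • Y.mul y x

/-- An orientation of degree `n` inducing the pairing: a chain-level functional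
supported in degree `n`, vanishing on boundaries, nontrivial on cohomology,
with `⟨x,y⟩ = o(x∧y)`. -/
def IsOrientation (o : A →ₗ[ℝ] ℝ) : Prop :=
  (∀ i : ℤ, i ≠ Y.n → ∀ x ∈ Y.grading i, o x = 0) ∧
  (∀ x : A, o (Y.d x) = 0) ∧
  (∃ x : A, Y.d x = 0 ∧ o x ≠ 0) ∧
  (∀ x y : A, Y.pair x y = o (Y.mul x y))

/-- The small subalgebra `S_P`: the smallest graded dg-subalgebra containing the
harmonic subspace `H_P = im π_P` and preserved by `P`. -/
def smallSub (P : A →ₗ[ℝ] A) : Submodule ℝ A :=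
  sInf {S : Submodule ℝ A |
    LinearMap.range (Y.toPairedComplex.assocProj P) ≤ S ∧
    Y.toPairedComplex.IsGradedSubspace S ∧
    (∀ x ∈ S, Y.d x ∈ S) ∧
    (∀ x ∈ S, ∀ y ∈ S, Y.mul x y ∈ S) ∧
    (∀ x ∈ S, P x ∈ S)}

end PairedDGA

/-- Elements of `A` obtained from homogeneous elements of the harmonic subspace
`H_P = im π_P` by iterated applications of `P` and of the product. -/
inductive TreeGen {A : Type*} [AddCommGroup A] [Module ℝ A]
    (Y : PairedDGA A) (P : A →ₗ[ℝ] A) : A → Prop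
  | base : ∀ (i : ℤ) (x : A), x ∈ Y.grading i →
      x ∈ LinearMap.range (Y.toPairedComplex.assocProj P) → TreeGen Y P x
  | mul : ∀ x y : A, TreeGen Y P x → TreeGen Y P y → TreeGen Y P (Y.mul x y)
  | app : ∀ x : A, TreeGen Y P x → TreeGen Y P (P x)


namespace Stmt10Aux

open DirectSum Module

variable {A : Type*} [AddCommGroup A] [Module ℝ A] (X : PairedComplex A)
  [DirectSum.Decomposition X.grading]

/-- Projection onto the degree `i` component. -/
noncomputable def p (i : ℤ) : A →ₗ[ℝ] A :=
  (X.grading i).subtype ∘ₗ (DirectSum.component ℝ ℤ (fun j => ↥(X.grading j)) i) ∘ₗ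
    (DirectSum.decomposeLinearEquiv X.grading).toLinearMap

lemma p_apply (i : ℤ) (x : A) : p X i x = (DirectSum.decompose X.grading x i : A) := rfl

lemma p_mem (i : ℤ) (x : A) : p X i x ∈ X.grading i := (DirectSum.decompose X.grading x i).2

lemma p_same {i : ℤ} {x : A} (hx : x ∈ X.grading i) : p X i x = x :=
  DirectSum.decompose_of_mem_same _ hx

lemma p_ne {i j : ℤ} {x : A} (hx : x ∈ X.grading i) (hij : i ≠ j) : p X j x = 0 := by
  rw [p_apply, DirectSum.decompose_of_mem_ne _ hx hij]

lemma homo_induction {P : A → Prop} (h0 : P 0)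
    (hhom : ∀ i : ℤ, ∀ x ∈ X.grading i, P x)
    (hadd : ∀ x y, P x → P y → P (x + y)) : ∀ x, P x :=
  DirectSum.Decomposition.inductionOn X.grading h0 (fun {i} m => hhom i m m.2) hadd

/-- The fundamental "sum of components" lemma, in submodule-membership form. -/
lemma mem_of_p (x : A) (S : Submodule ℝ A) (h : ∀ i, p X i x ∈ S) : x ∈ S := by
  classical
  rw [← DirectSum.sum_support_decompose X.grading x]
  exact Submodule.sum_mem _ fun i _ => h i

lemma eq_zero_of_p (x : A) (h : ∀ i, p X i x = 0) : x = 0 := by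
  have := mem_of_p X x ⊥ (fun i => by rw [h i]; exact Submodule.zero_mem _)
  simpa using this

lemma mem_grading_of_p {x : A} {i : ℤ} (h : ∀ j, j ≠ i → p X j x = 0) :
    x ∈ X.grading i := by
  have : x = p X i x := by
    have h0 : x - p X i x = 0 := by
      apply eq_zero_of_p X
      intro j
      rcases eq_or_ne j i with rfl | hj
      · rw [map_sub, p_same X (p_mem X j x), sub_self]
      · rw [map_sub, h j hj, p_ne X (p_mem X i x) (Ne.symm hj), sub_zero]
    exact sub_eq_zero.mp h0
  rw [this]; exact p_mem X i x

/-- `p` intertwines a map of pure degree. -/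
lemma p_comm_degree {f : A →ₗ[ℝ] A} {k : ℤ}
    (hf : ∀ i : ℤ, ∀ x ∈ X.grading i, f x ∈ X.grading (i + k)) (i : ℤ) (x : A) :
    p X (i + k) (f x) = f (p X i x) := by
  induction x using homo_induction X with
  | h0 => simp
  | hhom j y hy =>
    rcases eq_or_ne j i with rfl | hj
    · rw [p_same X hy, p_same X (hf j y hy)]
    · rw [p_ne X hy hj, map_zero, p_ne X (hf j y hy) (by omega)]
  | hadd a b ha hb => rw [map_add, map_add, map_add, ha, hb, ← map_add]

lemma p_comm_d (i : ℤ) (x : A) : p X (i + 1) (X.d x) = X.d (p X i x) :=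
  p_comm_degree X X.d_degree i x

lemma p_comm_d' (i : ℤ) (x : A) : p X i (X.d x) = X.d (p X (i - 1) x) := by
  have := p_comm_d X (i - 1) x
  rwa [sub_add_cancel] at this

/-- `Homo S`: `S` is stable under the graded projections. -/
def Homo (S : Submodule ℝ A) : Prop := ∀ x ∈ S, ∀ i, p X i x ∈ S

lemma homo_top : Homo X (⊤ : Submodule ℝ A) := fun _ _ _ => trivial

lemma homo_inf {S T : Submodule ℝ A} (hS : Homo X S) (hT : Homo X T) : Homo X (S ⊓ T) :=
  fun x hx i => ⟨hS x hx.1 i, hT x hx.2 i⟩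

lemma homo_sup {S T : Submodule ℝ A} (hS : Homo X S) (hT : Homo X T) : Homo X (S ⊔ T) := by
  intro x hx i
  rcases Submodule.mem_sup.mp hx with ⟨y, hy, z, hz, rfl⟩
  rw [map_add]
  exact Submodule.add_mem _ (Submodule.mem_sup_left (hS y hy i))
    (Submodule.mem_sup_right (hT z hz i))

lemma homo_ker_d : Homo X (LinearMap.ker X.d) := by
  intro x hx i
  have : X.d (p X i x) = p X (i + 1) (X.d x) := (p_comm_d X i x).symm
  rw [LinearMap.mem_ker] at hx ⊢
  rw [this, hx, map_zero]

lemma homo_range_d : Homo X (LinearMap.range X.d) := by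
  rintro x ⟨y, rfl⟩ i
  exact ⟨p X (i - 1) y, (p_comm_d' X i y).symm⟩

lemma homo_grading (i : ℤ) : Homo X (X.grading i) := by
  intro x hx j
  rcases eq_or_ne i j with rfl | hij
  · rw [p_same X hx]; exact hx
  · rw [p_ne X hx hij]; exact Submodule.zero_mem _

/-- Membership of components in the terms of a graded `iSup`. -/
lemma p_mem_of_iSup {W : ℤ → Submodule ℝ A} (hW : ∀ i, W i ≤ X.grading i) {x : A}
    (hx : x ∈ ⨆ i, W i) (j : ℤ) : p X j x ∈ W j := by
  refine Submodule.iSup_induction (motive := fun y => p X j y ∈ W j) W hx ?_ (by simp) ?_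
  · intro i y hy
    rcases eq_or_ne i j with rfl | hij
    · rwa [p_same X (hW i hy)]
    · rw [p_ne X (hW i hy) hij]; exact Submodule.zero_mem _
  · intro a b ha hb
    rw [map_add]; exact Submodule.add_mem _ ha hb

lemma homo_iSup {W : ℤ → Submodule ℝ A} (hW : ∀ i, W i ≤ X.grading i) :
    Homo X (⨆ i, W i) := fun x hx i =>
  Submodule.mem_iSup_of_mem i (p_mem_of_iSup X hW hx i)

lemma gradedOfHomo {S : Submodule ℝ A} (hS : Homo X S) : X.IsGradedSubspace S := by
  intro x hx
  apply mem_of_p X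
  intro i
  exact Submodule.mem_iSup_of_mem i ⟨hS x hx i, p_mem X i x⟩

lemma pair_zero_left {x : A} (y : A) (h : ∀ i, X.pair (p X i x) y = 0) :
    X.pair x y = 0 := by
  classical
  conv_lhs => rw [← DirectSum.sum_support_decompose X.grading x]
  rw [map_sum, LinearMap.sum_apply]
  exact Finset.sum_eq_zero fun i _ => h i

lemma pair_zero_right (x : A) {y : A} (h : ∀ j, X.pair x (p X j y) = 0) :
    X.pair x y = 0 := by
  classical
  conv_lhs => rw [← DirectSum.sum_support_decompose X.grading y]
  rw [map_sum]
  exact Finset.sum_eq_zero fun j _ => h j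

lemma neg_one_zpow_ne_zero (m : ℤ) : ((-1 : ℝ) ^ m) ≠ 0 :=
  zpow_ne_zero m (by norm_num)

lemma pair_symm_zero {i j : ℤ} {x y : A} (hx : x ∈ X.grading i) (hy : y ∈ X.grading j)
    (h : X.pair y x = 0) : X.pair x y = 0 := by
  rw [X.pair_symm i j x hx y hy, h, mul_zero]

lemma pair_flip {S T : Submodule ℝ A} (hS : Homo X S) (hT : Homo X T)
    (h : ∀ s ∈ S, ∀ t ∈ T, X.pair s t = 0) :
    ∀ t ∈ T, ∀ s ∈ S, X.pair t s = 0 := by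
  intro t ht s hs
  apply pair_zero_left X
  intro i
  apply pair_zero_right X
  intro j
  exact pair_symm_zero X (p_mem X i t) (p_mem X j s)
    (h _ (hS s hs j) _ (hT t ht i))

lemma mem_degSub_iff {x : A} : x ∈ X.degSub ↔ ∀ y, X.pair x y = 0 :=
  ⟨fun h y => h y trivial, fun h y _ => h y⟩

lemma pair_degSub_left {x : A} (hx : x ∈ X.degSub) (y : A) : X.pair x y = 0 :=
  hx y trivial

lemma homo_degSub : Homo X X.degSub := by
  intro x hx i
  rw [mem_degSub_iff]
  intro y
  apply pair_zero_right X
  intro j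
  by_cases hij : i + j = X.n
  · have hdeg : ∀ k, k ≠ i → X.pair (p X k x) (p X j y) = 0 := fun k hk =>
      X.pair_degree k j (by omega) _ (p_mem X k x) _ (p_mem X j y)
    have h1 : X.pair (x - p X i x) (p X j y) = 0 := by
      apply pair_zero_left X
      intro k
      rcases eq_or_ne k i with rfl | hk
      · rw [map_sub, p_same X (p_mem X k x), sub_self, map_zero, LinearMap.zero_apply]
      · rw [map_sub, p_ne X (p_mem X i x) (Ne.symm hk), sub_zero]
        exact hdeg k hk
    have h2 : X.pair x (p X j y) = 0 := pair_degSub_left X hx _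
    have := congrArg (fun z => z) h1
    rw [map_sub, LinearMap.sub_apply, h2, zero_sub, neg_eq_zero] at h1
    exact h1
  · exact X.pair_degree i j hij _ (p_mem X i x) _ (p_mem X j y)

lemma pair_degSub_right {y : A} (hy : y ∈ X.degSub) (x : A) : X.pair x y = 0 :=
  pair_flip X (homo_degSub X) (homo_top X)
    (fun s hs t _ => pair_degSub_left X hs t) x trivial y hy

lemma d_degSub {x : A} (hx : x ∈ X.degSub) : X.d x ∈ X.degSub := by
  rw [mem_degSub_iff]
  intro y
  apply pair_zero_left X
  intro i
  rw [p_comm_d' X i x]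
  rw [X.pair_d (i - 1) _ (p_mem X (i - 1) x) y]
  rw [pair_degSub_left X (homo_degSub X x hx (i - 1)) (X.d y), mul_zero]

lemma pair_ker_d {x : A} (hx : X.d x = 0) (y : A) : X.pair x (X.d y) = 0 := by
  apply pair_zero_left X
  intro i
  have h1 := X.pair_d i _ (p_mem X i x) y
  have h2 : X.d (p X i x) = 0 := by rw [← p_comm_d X i x, hx, map_zero]
  rw [h2] at h1
  simp only [map_zero, LinearMap.zero_apply] at h1
  exact ((mul_eq_zero.mp h1.symm).resolve_left (neg_one_zpow_ne_zero _))

lemma pair_d_ker {y : A} (hy : X.d y = 0) (x : A) : X.pair (X.d x) y = 0 := by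
  apply pair_zero_left X
  intro i
  rw [p_comm_d' X i x, X.pair_d (i - 1) _ (p_mem X (i - 1) x) y, hy, map_zero, mul_zero]

lemma homo_perp {S : Submodule ℝ A} (hS : Homo X S) : Homo X (X.perp S) := by
  intro x hx i
  intro s hs
  apply pair_zero_right X
  intro j
  by_cases hij : i + j = X.n
  · have hdeg : ∀ k, k ≠ i → X.pair (p X k x) (p X j s) = 0 := fun k hk =>
      X.pair_degree k j (by omega) _ (p_mem X k x) _ (p_mem X j s)
    have h1 : X.pair (x - p X i x) (p X j s) = 0 := by
      apply pair_zero_left X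
      intro k
      rcases eq_or_ne k i with rfl | hk
      · rw [map_sub, p_same X (p_mem X k x), sub_self, map_zero, LinearMap.zero_apply]
      · rw [map_sub, p_ne X (p_mem X i x) (Ne.symm hk), sub_zero]
        exact hdeg k hk
    have h2 : X.pair x (p X j s) = 0 := hx _ (hS s hs j)
    rw [map_sub, LinearMap.sub_apply, h2, zero_sub, neg_eq_zero] at h1
    exact h1
  · exact X.pair_degree i j hij _ (p_mem X i x) _ (p_mem X j s)

lemma exists_compl_le {U V : Submodule ℝ A} (h : U ≤ V) :
    ∃ W, W ≤ V ∧ U ⊓ W = ⊥ ∧ U ⊔ W = V := by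
  obtain ⟨W', hW'⟩ := Submodule.exists_isCompl (U.comap V.subtype)
  refine ⟨W'.map V.subtype, Submodule.map_subtype_le V W', ?_, ?_⟩
  · rw [eq_bot_iff]
    rintro x ⟨hxU, hxW⟩
    obtain ⟨⟨y, hyV⟩, hyW', rfl⟩ := hxW
    have hmem : (⟨y, hyV⟩ : ↥V) ∈ U.comap V.subtype ⊓ W' := ⟨hxU, hyW'⟩
    rw [hW'.inf_eq_bot] at hmem
    simpa using hmem
  · apply le_antisymm (sup_le h (Submodule.map_subtype_le V W'))
    intro x hxV
    have hmem : (⟨x, hxV⟩ : ↥V) ∈ U.comap V.subtype ⊔ W' := by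
      rw [hW'.sup_eq_top]; trivial
    rcases Submodule.mem_sup.mp hmem with ⟨a, ha, b, hb, hab⟩
    refine Submodule.mem_sup.mpr ⟨↑a, ha, ↑b, ⟨b, hb, rfl⟩, ?_⟩
    have := congrArg (Subtype.val) hab
    simpa using this

lemma exists_graded_compl {U V : Submodule ℝ A} (hU : Homo X U) (hV : Homo X V)
    (hUV : U ≤ V) :
    ∃ W, W ≤ V ∧ U ⊓ W = ⊥ ∧ U ⊔ W = V ∧ Homo X W := by
  have hle : ∀ i : ℤ, U ⊓ X.grading i ≤ V ⊓ X.grading i :=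
    fun i => inf_le_inf_right _ hUV
  choose W hWle hWinf hWsup using fun i => exists_compl_le (hle i)
  have hWgr : ∀ i, W i ≤ X.grading i := fun i => (hWle i).trans inf_le_right
  refine ⟨⨆ i, W i, iSup_le fun i => (hWle i).trans inf_le_left, ?_, ?_, homo_iSup X hWgr⟩
  · rw [eq_bot_iff]
    rintro x ⟨hxU, hxW⟩
    rw [Submodule.mem_bot]
    apply eq_zero_of_p X
    intro i
    have h1 : p X i x ∈ (U ⊓ X.grading i) ⊓ W i :=
      ⟨⟨hU x hxU i, p_mem X i x⟩, p_mem_of_iSup X hWgr hxW i⟩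
    rw [hWinf i] at h1
    simpa using h1
  · apply le_antisymm (sup_le hUV (iSup_le fun i => (hWle i).trans inf_le_left))
    intro x hx
    apply mem_of_p X
    intro i
    have h1 : p X i x ∈ (U ⊓ X.grading i) ⊔ W i := by
      rw [hWsup i]; exact ⟨hV x hx i, p_mem X i x⟩
    rcases Submodule.mem_sup.mp h1 with ⟨a, ha, b, hb, hab⟩
    rw [← hab]
    exact Submodule.add_mem _ (Submodule.mem_sup_left ha.1)
      (Submodule.mem_sup_right (Submodule.mem_iSup_of_mem i hb))

lemma grading_cast {i j : ℤ} (hij : i = j) {x : A} (h : x ∈ X.grading i) :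
    x ∈ X.grading j := hij ▸ h

lemma exists_splitting
    (hacyclic : ∀ x ∈ X.degSub, X.d x = 0 → ∃ z ∈ X.degSub, x = X.d z) :
    ∃ E : Submodule ℝ A, Homo X E ∧ (∀ x ∈ E, X.d x ∈ E) ∧
      E ⊓ X.degSub = ⊥ ∧ E ⊔ X.degSub = ⊤ := by
  classical
  set D := X.degSub with hD
  have hDhomo : Homo X D := homo_degSub X
  have hdD : ∀ x ∈ D, X.d x ∈ D := fun x hx => d_degSub X hx
  set ZD := LinearMap.ker X.d ⊓ D with hZD
  have hZDhomo : Homo X ZD := homo_inf X (homo_ker_d X) hDhomo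
  obtain ⟨CD, hCDle, hCDinf, hCDsup, hCDhomo⟩ :=
    exists_graded_compl X hZDhomo hDhomo inf_le_right
  obtain ⟨F, _hFle, hFinf, hFsup, hFhomo⟩ :=
    exists_graded_compl X hDhomo (homo_top X) le_top
  have hdCD : ∀ x ∈ CD, X.d x ∈ ZD := fun x hx =>
    ⟨LinearMap.mem_ker.mpr (X.d_sq x), hdD x (hCDle hx)⟩
  set dr : ↥CD →ₗ[ℝ] ↥ZD := X.d.restrict hdCD with hdrdef
  have hdr_apply : ∀ c : ↥CD, (dr c : A) = X.d (c : A) := fun c => rfl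
  have hdr_inj : Function.Injective dr := by
    rw [← LinearMap.ker_eq_bot, eq_bot_iff]
    rintro ⟨x, hx⟩ hker
    have h1 : X.d x = 0 := congrArg Subtype.val hker
    have h2 : x ∈ ZD ⊓ CD := ⟨⟨LinearMap.mem_ker.mpr h1, hCDle hx⟩, hx⟩
    rw [hCDinf] at h2
    rw [Submodule.mem_bot]
    apply Subtype.ext
    simpa using (Submodule.mem_bot ℝ).mp h2
  have hdr_surj : Function.Surjective dr := by
    rintro ⟨z, hz⟩
    obtain ⟨w, hw, hzw⟩ := hacyclic z hz.2 hz.1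
    have hw' : w ∈ ZD ⊔ CD := by rw [hCDsup]; exact hw
    rcases Submodule.mem_sup.mp hw' with ⟨a, ha, c, hc, rfl⟩
    refine ⟨⟨c, hc⟩, Subtype.ext ?_⟩
    show X.d c = z
    have ha0 : X.d a = 0 := ha.1
    rw [hzw, map_add, ha0, zero_add]
  set e := LinearEquiv.ofBijective dr ⟨hdr_inj, hdr_surj⟩ with hedef
  have he_apply : ∀ c : ↥CD, ((e c : ↥ZD) : A) = X.d (c : A) := fun c => rfl
  have hcompl : IsCompl ZD (CD ⊔ F) := by
    constructor
    · rw [disjoint_iff, eq_bot_iff]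
      rintro x ⟨hxZ, hxCF⟩
      rcases Submodule.mem_sup.mp hxCF with ⟨c, hc, f, hf, rfl⟩
      have hfD : f ∈ D := by
        have h1 : c + f ∈ D := hxZ.2
        have h2 : (c + f) - c ∈ D := Submodule.sub_mem _ h1 (hCDle hc)
        simpa using h2
      have hf0 : f = 0 := by
        have : f ∈ D ⊓ F := ⟨hfD, hf⟩
        rw [hFinf] at this; simpa using this
      have hc0 : c = 0 := by
        have : c ∈ ZD ⊓ CD := ⟨by simpa [hf0] using hxZ, hc⟩
        rw [hCDinf] at this; simpa using this
      simp [hf0, hc0]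
    · rw [codisjoint_iff, ← sup_assoc, hCDsup, hFsup]
  set pr := Submodule.projectionOnto ZD (CD ⊔ F) hcompl with hprdef
  set h : A →ₗ[ℝ] A := CD.subtype ∘ₗ (e.symm : ↥ZD →ₗ[ℝ] ↥CD) ∘ₗ (pr : A →ₗ[ℝ] ↥ZD)
    with hhdef
  have h_apply : ∀ x : A, h x = ((e.symm (pr x) : ↥CD) : A) := fun x => rfl
  have h_mem : ∀ x, h x ∈ CD := fun x => (e.symm (pr x)).2
  have hdh : ∀ x : A, X.d (h x) = ((pr x : ↥ZD) : A) := by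
    intro x
    rw [h_apply]
    have := he_apply (e.symm (pr x))
    rw [e.apply_symm_apply] at this
    exact this.symm
  have h_zeroCF : ∀ x ∈ CD ⊔ F, h x = 0 := by
    intro x hx
    rw [h_apply, Submodule.projectionOnto_apply_of_mem_right hcompl hx]
    simp
  have h_dZD : ∀ z (hz : z ∈ ZD), X.d (h z) = z := by
    intro z hz
    rw [hdh]
    rw [show pr z = ⟨z, hz⟩ from Submodule.linearProjOfIsCompl_apply_left hcompl ⟨z, hz⟩]
  have h_dc : ∀ c ∈ CD, h (X.d c) = c := by
    intro c hc
    have hdc : X.d c ∈ ZD := hdCD c hc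
    rw [h_apply]
    rw [show pr (X.d c) = ⟨X.d c, hdc⟩ from
      Submodule.linearProjOfIsCompl_apply_left hcompl ⟨X.d c, hdc⟩]
    have : e ⟨c, hc⟩ = ⟨X.d c, hdc⟩ := Subtype.ext (he_apply ⟨c, hc⟩)
    rw [← this, e.symm_apply_apply]
  -- h has degree -1
  have h_deg : ∀ i : ℤ, ∀ x ∈ X.grading i, h x ∈ X.grading (i + (-1)) := by
    intro i x hx
    have hmem : x ∈ ZD ⊔ (CD ⊔ F) := by rw [hcompl.sup_eq_top]; trivial
    rcases Submodule.mem_sup.mp hmem with ⟨z, hz, w, hw, hzw⟩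
    have hprx : pr x = ⟨z, hz⟩ := by
      rw [← hzw, map_add,
        Submodule.projectionOnto_apply_of_mem_left hcompl hz,
        Submodule.projectionOnto_apply_of_mem_right hcompl hw, add_zero]
    -- z is homogeneous of degree i
    have hzi : z ∈ X.grading i := by
      have hxp : x = p X i x := (p_same X hx).symm
      have hsum : z - p X i z = p X i w - w := by
        have h1 : x = p X i z + p X i w := by
          rw [hxp, ← hzw, map_add]
        have h2 : z + w = p X i w + p X i z := by rw [add_comm (p X i w), ← h1, ← hzw]
        exact sub_eq_sub_iff_add_eq_add.mpr h2
      have hmem2 : z - p X i z ∈ ZD ⊓ (CD ⊔ F) := by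
        constructor
        · exact Submodule.sub_mem _ hz (hZDhomo z hz i)
        · rw [hsum]
          exact Submodule.sub_mem _ (homo_sup X hCDhomo hFhomo w hw i) hw
      rw [hcompl.inf_eq_bot] at hmem2
      have : z = p X i z := by
        have h3 := (Submodule.mem_bot ℝ).mp hmem2
        exact sub_eq_zero.mp h3
      rw [this]; exact p_mem X i z
    -- now h x =: c with d c = z
    set c := h x with hc
    have hcCD : c ∈ CD := h_mem x
    have hdcz : X.d c = z := by rw [hc, hdh, hprx]
    apply mem_grading_of_p X
    intro j hj
    have hpjc : p X j c ∈ CD := hCDhomo c hcCD j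
    have hdpjc : X.d (p X j c) = 0 := by
      rw [← p_comm_d X j c, hdcz, p_ne X hzi (by omega)]
    have : p X j c ∈ ZD ⊓ CD :=
      ⟨⟨LinearMap.mem_ker.mpr hdpjc, hCDle hpjc⟩, hpjc⟩
    rw [hCDinf] at this
    simpa using this
  set r : A →ₗ[ℝ] A := X.d ∘ₗ h + h ∘ₗ X.d with hrdef
  have r_apply : ∀ x, r x = X.d (h x) + h (X.d x) := fun x => rfl
  have r_memD : ∀ x, r x ∈ D := by
    intro x
    rw [r_apply]
    exact Submodule.add_mem _ (hdD _ (hCDle (h_mem x))) (hCDle (h_mem (X.d x)))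
  have r_id_ZD : ∀ z ∈ ZD, r z = z := by
    intro z hz
    rw [r_apply, h_dZD z hz, LinearMap.mem_ker.mp hz.1]
    rw [map_zero, add_zero]
  have r_id_CD : ∀ c ∈ CD, r c = c := by
    intro c hc
    rw [r_apply, h_zeroCF c (Submodule.mem_sup_left hc), map_zero, zero_add, h_dc c hc]
  have r_id_D : ∀ x ∈ D, r x = x := by
    intro x hx
    have : x ∈ ZD ⊔ CD := by rw [hCDsup]; exact hx
    rcases Submodule.mem_sup.mp this with ⟨a, ha, c, hc, rfl⟩
    rw [map_add, r_id_ZD a ha, r_id_CD c hc]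
  have r_d_comm : ∀ x, r (X.d x) = X.d (r x) := by
    intro x
    rw [r_apply, r_apply, X.d_sq, map_zero, add_zero, map_add, X.d_sq, zero_add]
  have r_deg : ∀ i : ℤ, ∀ x ∈ X.grading i, r x ∈ X.grading (i + 0) := by
    intro i x hx
    rw [r_apply]
    apply Submodule.add_mem
    · exact grading_cast X (by omega) (X.d_degree _ _ (h_deg i x hx))
    · exact grading_cast X (by omega) (h_deg (i+1) _ (X.d_degree i x hx))
  refine ⟨LinearMap.ker r, ?_, ?_, ?_, ?_⟩
  · intro x hx i
    rw [LinearMap.mem_ker] at hx ⊢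
    have := p_comm_degree X r_deg i x
    rw [hx, map_zero] at this
    rw [← this]
  · intro x hx
    rw [LinearMap.mem_ker] at hx ⊢
    rw [r_d_comm, hx, map_zero]
  · rw [eq_bot_iff]
    intro x hx
    have hxE : r x = 0 := LinearMap.mem_ker.mp hx.1
    rw [Submodule.mem_bot, ← r_id_D x hx.2, hxE]
  · rw [eq_top_iff]
    intro x _
    have h1 : x - r x ∈ LinearMap.ker r := by
      rw [LinearMap.mem_ker, map_sub, r_id_D _ (r_memD x), sub_self]
    have h2 : x = (x - r x) + r x := by abel
    rw [h2]
    exact Submodule.add_mem _ (Submodule.mem_sup_left h1)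
      (Submodule.mem_sup_right (r_memD x))

section Duality

variable (V W : Submodule ℝ A)

/-- The pairing as a map `V → W*`. -/
noncomputable def toDualRes : ↥V →ₗ[ℝ] Module.Dual ℝ ↥W where
  toFun x := (X.pair x.1).domRestrict W
  map_add' x y := by ext w; simp
  map_smul' c x := by ext w; simp

lemma toDualRes_apply (x : ↥V) (w : ↥W) :
    toDualRes X V W x w = X.pair (x : A) (w : A) := rfl

lemma toDualRes_inj (h : ∀ x ∈ V, (∀ y ∈ W, X.pair x y = 0) → x = 0) :
    Function.Injective (toDualRes X V W) := by
  rw [← LinearMap.ker_eq_bot, eq_bot_iff]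
  intro x hx
  rw [Submodule.mem_bot]
  apply Subtype.ext
  refine h (x : A) x.2 fun y hy => ?_
  have h0 : toDualRes X V W x = 0 := hx
  have := DFunLike.congr_fun h0 ⟨y, hy⟩
  simpa [toDualRes_apply] using this

/-- The flipped pairing as a map `W → V*`. -/
noncomputable def toDualResF : ↥W →ₗ[ℝ] Module.Dual ℝ ↥V where
  toFun w := (X.pair.flip w.1).domRestrict V
  map_add' x y := by ext v; simp
  map_smul' c x := by ext v; simp

lemma toDualResF_apply (w : ↥W) (v : ↥V) :
    toDualResF X V W w v = X.pair (v : A) (w : A) := rfl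

lemma toDualResF_inj (h : ∀ y ∈ W, (∀ x ∈ V, X.pair x y = 0) → y = 0) :
    Function.Injective (toDualResF X V W) := by
  rw [← LinearMap.ker_eq_bot, eq_bot_iff]
  intro y hy
  rw [Submodule.mem_bot]
  apply Subtype.ext
  refine h (y : A) y.2 fun x hx => ?_
  have h0 : toDualResF X V W y = 0 := hy
  have := DFunLike.congr_fun h0 ⟨x, hx⟩
  simpa [toDualResF] using this

variable [FiniteDimensional ℝ ↥V] [FiniteDimensional ℝ ↥W]

lemma dual_finrank_eq'
    (hL : ∀ x ∈ V, (∀ y ∈ W, X.pair x y = 0) → x = 0)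
    (hR : ∀ y ∈ W, (∀ x ∈ V, X.pair x y = 0) → y = 0) :
    finrank ℝ ↥V = finrank ℝ ↥W := by
  have h1 := LinearMap.finrank_le_finrank_of_injective (toDualRes_inj X V W hL)
  have h2 := LinearMap.finrank_le_finrank_of_injective (toDualResF_inj X V W hR)
  rw [Subspace.dual_finrank_eq] at h1 h2
  omega

lemma toDualRes_surj
    (hL : ∀ x ∈ V, (∀ y ∈ W, X.pair x y = 0) → x = 0)
    (hR : ∀ y ∈ W, (∀ x ∈ V, X.pair x y = 0) → y = 0) :
    Function.Surjective (toDualRes X V W) := by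
  refine (LinearMap.injective_iff_surjective_of_finrank_eq_finrank ?_).mp
    (toDualRes_inj X V W hL)
  rw [Subspace.dual_finrank_eq]
  exact dual_finrank_eq' X V W hL hR

lemma perp_finrank
    (hL : ∀ x ∈ V, (∀ y ∈ W, X.pair x y = 0) → x = 0)
    (hR : ∀ y ∈ W, (∀ x ∈ V, X.pair x y = 0) → y = 0)
    (U : Submodule ℝ A) (hU : U ≤ W) :
    finrank ℝ ↥(X.perp U ⊓ V) + finrank ℝ ↥U = finrank ℝ ↥V := by
  haveI : FiniteDimensional ℝ ↥U := Submodule.finiteDimensional_of_le hU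
  set ρ : ↥V →ₗ[ℝ] Module.Dual ℝ ↥U :=
    (Submodule.inclusion hU).dualMap ∘ₗ toDualRes X V W with hρ
  have hρsurj : Function.Surjective ρ := by
    show Function.Surjective
      ⇑((Submodule.inclusion hU).dualMap ∘ₗ toDualRes X V W)
    rw [LinearMap.coe_comp]
    exact Function.Surjective.comp
      (LinearMap.dualMap_surjective_of_injective (Submodule.inclusion_injective hU))
      (toDualRes_surj X V W hL hR)
  have hker : LinearMap.ker ρ = (X.perp U ⊓ V).comap V.subtype := by
    ext x
    constructor
    · intro hx
      refine ⟨fun b hb => ?_, x.2⟩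
      have := DFunLike.congr_fun (LinearMap.mem_ker.mp hx) ⟨b, hb⟩
      simpa [hρ, toDualRes_apply] using this
    · intro hx
      rw [LinearMap.mem_ker]
      ext u
      have : X.pair (x : A) (u : A) = 0 := hx.1 (u : A) u.2
      simpa [hρ, toDualRes_apply] using this
  have h1 := LinearMap.finrank_range_add_finrank_ker ρ
  have e1 : finrank ℝ ↥(LinearMap.range ρ) = finrank ℝ ↥U := by
    rw [LinearMap.range_eq_top.mpr hρsurj, finrank_top, Subspace.dual_finrank_eq]
  have e2 : finrank ℝ ↥(LinearMap.ker ρ) = finrank ℝ ↥(X.perp U ⊓ V) := by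
    rw [hker]
    exact (Submodule.comapSubtypeEquivOfLe inf_le_right).finrank_eq
  rw [e1, e2] at h1
  omega

end Duality

lemma isHodge_of_hyps
    (hacyclic : ∀ x ∈ X.degSub, X.d x = 0 → ∃ z ∈ X.degSub, x = X.d z)
    (hfin : ∀ i : ℤ, FiniteDimensional ℝ
      (↥(X.grading i) ⧸ (X.degSub.comap (X.grading i).subtype))) :
    X.IsHodgeType := by
  classical
  obtain ⟨E, hEhomo, hEd, hEDinf, hEDsup⟩ := exists_splitting X hacyclic
  set D := X.degSub with hDdef
  have hDhomo : Homo X D := homo_degSub X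
  set Ei : ℤ → Submodule ℝ A := fun i => E ⊓ X.grading i with hEidef
  have hEile : ∀ i, Ei i ≤ X.grading i := fun i => inf_le_right
  have finEi : ∀ i, FiniteDimensional ℝ ↥(Ei i) := by
    intro i
    haveI := hfin i
    set q : ↥(Ei i) →ₗ[ℝ] (↥(X.grading i) ⧸ (D.comap (X.grading i).subtype)) :=
      (D.comap (X.grading i).subtype).mkQ ∘ₗ
        Submodule.inclusion (inf_le_right : Ei i ≤ X.grading i) with hq
    apply FiniteDimensional.of_injective q
    rw [← LinearMap.ker_eq_bot, eq_bot_iff]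
    intro x hx
    rw [Submodule.mem_bot]
    have h0 : q x = 0 := LinearMap.mem_ker.mp hx
    rw [hq, LinearMap.comp_apply, ← LinearMap.mem_ker, Submodule.ker_mkQ] at h0
    have h1 : (x : A) ∈ D := by
      have h3 := Submodule.mem_comap.mp h0
      simpa using h3
    have h3 : (x : A) ∈ E ⊓ D := ⟨x.2.1, h1⟩
    rw [hEDinf] at h3
    exact Subtype.ext ((Submodule.mem_bot ℝ).mp h3)
  have nd : ∀ i j : ℤ, i + j = X.n → ∀ x ∈ Ei i,
      (∀ y ∈ Ei j, X.pair x y = 0) → x = 0 := by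
    intro i j hij x hx h
    have hxD : x ∈ D := by
      apply (mem_degSub_iff X).mpr
      intro y
      have hy : y ∈ E ⊔ D := by rw [hEDsup]; trivial
      rcases Submodule.mem_sup.mp hy with ⟨e, he, u, hu, rfl⟩
      have h2 : X.pair x u = 0 := pair_degSub_right X hu x
      have h3 : X.pair x e = 0 := by
        apply pair_zero_right X
        intro k
        by_cases hk : i + k = X.n
        · have hkj : k = j := by omega
          subst hkj
          exact h _ ⟨hEhomo e he k, p_mem X k e⟩
        · exact X.pair_degree i k hk _ hx.2 _ (p_mem X k e)
      rw [map_add, h3, h2, add_zero]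
    have h4 : x ∈ E ⊓ D := ⟨hx.1, hxD⟩
    rw [hEDinf] at h4
    exact (Submodule.mem_bot ℝ).mp h4
  have ndR : ∀ i j : ℤ, i + j = X.n → ∀ y ∈ Ei j,
      (∀ x ∈ Ei i, X.pair x y = 0) → y = 0 := by
    intro i j hij y hy h
    refine nd j i (by omega) y hy ?_
    intro x hxm
    exact pair_symm_zero X hy.2 hxm.2 (h x hxm)
  set ZE : Submodule ℝ A := LinearMap.ker X.d ⊓ E with hZEdef
  have hZEhomo : Homo X ZE := homo_inf X (homo_ker_d X) hEhomo
  obtain ⟨N, hNle, hNinf, hNsup, hNhomo⟩ :=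
    exists_graded_compl X hZEhomo hEhomo inf_le_right
  set Ni : ℤ → Submodule ℝ A := fun i => N ⊓ X.grading i with hNidef
  set ZEi : ℤ → Submodule ℝ A := fun i => ZE ⊓ X.grading i with hZEidef
  set BEi : ℤ → Submodule ℝ A := fun i => Submodule.map X.d (Ei (i-1)) with hBEidef
  have hNiE : ∀ i, Ni i ≤ Ei i := fun i => inf_le_inf_right _ hNle
  have hZEiE : ∀ i, ZEi i ≤ Ei i := fun i => inf_le_inf_right _ inf_le_right
  have hZEiker : ∀ i, ZEi i ≤ LinearMap.ker X.d :=
    fun i => le_trans inf_le_left inf_le_left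
  have hBEi_grading : ∀ i, BEi i ≤ X.grading i := by
    rintro i x ⟨w, hw, rfl⟩
    exact grading_cast X (by omega) (X.d_degree _ _ hw.2)
  have hBEi_E : ∀ i, BEi i ≤ E := by
    rintro i x ⟨w, hw, rfl⟩; exact hEd w hw.1
  have hBEi_ker : ∀ i, BEi i ≤ LinearMap.ker X.d := by
    rintro i x ⟨w, hw, rfl⟩; exact LinearMap.mem_ker.mpr (X.d_sq w)
  have hBEi_ZEi : ∀ i, BEi i ≤ ZEi i := fun i x hx =>
    ⟨⟨hBEi_ker i hx, hBEi_E i hx⟩, hBEi_grading i hx⟩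
  have hBEi_Ei : ∀ i, BEi i ≤ Ei i := fun i => (hBEi_ZEi i).trans (hZEiE i)
  have hEi_split : ∀ i, ZEi i ⊔ Ni i = Ei i := by
    intro i
    apply le_antisymm (sup_le (hZEiE i) (hNiE i))
    rintro x ⟨hxE, hxg⟩
    have hx1 : x ∈ ZE ⊔ N := by rw [hNsup]; exact hxE
    rcases Submodule.mem_sup.mp hx1 with ⟨z, hz, w, hw, rfl⟩
    rw [show z + w = p X i z + p X i w from by rw [← map_add, p_same X hxg]]
    exact Submodule.add_mem _
      (Submodule.mem_sup_left ⟨hZEhomo z hz i, p_mem X i z⟩)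
      (Submodule.mem_sup_right ⟨hNhomo w hw i, p_mem X i w⟩)
  have hZENi_inf : ∀ i, ZEi i ⊓ Ni i = ⊥ := by
    intro i; rw [eq_bot_iff]; rintro x ⟨h1, h2⟩
    have h3 : x ∈ ZE ⊓ N := ⟨h1.1, h2.1⟩
    rw [hNinf] at h3; exact h3
  have diamond : ∀ i j, i + j = X.n →
      finrank ℝ ↥(Ei i) = finrank ℝ ↥(ZEi i) + finrank ℝ ↥(BEi j) := by
    intro i j hij
    haveI := finEi i; haveI := finEi j
    have hperp := perp_finrank X (Ei i) (Ei j) (nd i j hij) (ndR i j hij)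
      (BEi j) (hBEi_Ei j)
    have hid : X.perp (BEi j) ⊓ Ei i = ZEi i := by
      apply le_antisymm
      · rintro x ⟨hxperp, hxE⟩
        refine ⟨⟨LinearMap.mem_ker.mpr ?_, hxE.1⟩, hxE.2⟩
        have hdx : X.d x ∈ Ei (i+1) := ⟨hEd x hxE.1, X.d_degree i x hxE.2⟩
        refine nd (i+1) (j-1) (by omega) _ hdx ?_
        intro y hy
        have h1 := X.pair_d i x hxE.2 y
        have h2 : X.pair x (X.d y) = 0 := hxperp _ ⟨y, hy, rfl⟩
        rw [h1, h2, mul_zero]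
      · intro x hx
        refine ⟨?_, hZEiE i hx⟩
        rintro b ⟨w, hw, rfl⟩
        exact pair_ker_d X (LinearMap.mem_ker.mp hx.1.1) w
    rw [hid] at hperp
    omega
  have hNB : ∀ i j, i + j = X.n → finrank ℝ ↥(Ni j) = finrank ℝ ↥(BEi i) := by
    intro i j hij
    haveI := finEi j
    haveI : FiniteDimensional ℝ ↥(ZEi j) := Submodule.finiteDimensional_of_le (hZEiE j)
    haveI : FiniteDimensional ℝ ↥(Ni j) := Submodule.finiteDimensional_of_le (hNiE j)
    have h1 := Submodule.finrank_sup_add_finrank_inf_eq (ZEi j) (Ni j)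
    rw [hEi_split j, hZENi_inf j, finrank_bot] at h1
    have h2 := diamond j i (by omega)
    omega
  have key : ∀ i : ℤ, ∃ Ci : Submodule ℝ A,
      Ci ≤ E ⊓ X.grading i ∧
      Ci ⊓ LinearMap.ker X.d = ⊥ ∧
      Ni i ≤ Ci ⊔ BEi i ∧
      (∀ x ∈ Ci, ∃ y ∈ Ni i, ∃ b ∈ BEi i, x = y + b ∧
        ∀ z ∈ N, X.pair z b = -(2⁻¹ : ℝ) * X.pair z y) ∧
      (∀ z : A, ∃ b ∈ BEi i, ∀ y ∈ Ni (X.n - i), X.pair y b = X.pair y z) := by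
    intro i
    set j := X.n - i with hjdef
    have hij : i + j = X.n := by omega
    haveI := finEi i; haveI := finEi j
    haveI : FiniteDimensional ℝ ↥(Ni j) := Submodule.finiteDimensional_of_le (hNiE j)
    haveI : FiniteDimensional ℝ ↥(BEi i) := Submodule.finiteDimensional_of_le (hBEi_Ei i)
    set Φ : ↥(BEi i) →ₗ[ℝ] Module.Dual ℝ ↥(Ni j) := toDualResF X (Ni j) (BEi i) with hΦ
    have hΦinj : Function.Injective Φ := by
      apply toDualResF_inj
      intro b hb h0
      have hall : ∀ y ∈ Ei j, X.pair y b = 0 := by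
        intro y hy
        have h1 : y ∈ ZEi j ⊔ Ni j := by rw [hEi_split j]; exact hy
        rcases Submodule.mem_sup.mp h1 with ⟨z, hz, w, hw, rfl⟩
        have hz0 : X.pair z b = 0 := by
          obtain ⟨s, _hs, rfl⟩ := hb
          exact pair_ker_d X (LinearMap.mem_ker.mp (hZEiker j hz)) s
        have hw0 : X.pair w b = 0 := h0 w hw
        rw [map_add, LinearMap.add_apply, hz0, hw0, add_zero]
      refine nd i j hij b (hBEi_Ei i hb) ?_
      intro y hy
      exact pair_symm_zero X (hBEi_grading i hb) (hEile j hy) (hall y hy)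
    have hΦbij : Function.Bijective Φ := by
      refine ⟨hΦinj, (LinearMap.injective_iff_surjective_of_finrank_eq_finrank ?_).mp hΦinj⟩
      rw [Subspace.dual_finrank_eq]
      exact (hNB i j hij).symm
    set eΦ := LinearEquiv.ofBijective Φ hΦbij with heΦ
    set ψ : ↥(Ni i) →ₗ[ℝ] Module.Dual ℝ ↥(Ni j) :=
      (-(2⁻¹ : ℝ)) • (toDualResF X (Ni j) (Ni i)) with hψ
    set L : ↥(Ni i) →ₗ[ℝ] ↥(BEi i) := (eΦ.symm : _ →ₗ[ℝ] _) ∘ₗ ψ with hL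
    have hLspec : ∀ (y : ↥(Ni i)) (x : ↥(Ni j)),
        X.pair (x : A) ((L y : ↥(BEi i)) : A) = -(2⁻¹ : ℝ) * X.pair (x : A) (y : A) := by
      intro y x
      have h1 : Φ (L y) = ψ y := by
        show Φ (eΦ.symm (ψ y)) = ψ y
        exact eΦ.apply_symm_apply (ψ y)
      have h2 := DFunLike.congr_fun h1 x
      rw [hΦ, toDualResF_apply] at h2
      rw [h2, hψ, LinearMap.smul_apply, LinearMap.smul_apply, toDualResF_apply,
        smul_eq_mul]
    set g : ↥(Ni i) →ₗ[ℝ] A := (Ni i).subtype + (BEi i).subtype ∘ₗ L with hg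
    have hg_apply : ∀ y : ↥(Ni i), g y = (y : A) + ((L y : ↥(BEi i)) : A) := fun y => rfl
    refine ⟨LinearMap.range g, ?_, ?_, ?_, ?_, ?_⟩
    · rintro x ⟨y, rfl⟩
      rw [hg_apply]
      exact ⟨Submodule.add_mem _ (hNle y.2.1) (hBEi_E i (L y).2),
        Submodule.add_mem _ y.2.2 (hBEi_grading i (L y).2)⟩
    · rw [eq_bot_iff]
      rintro x ⟨⟨y, rfl⟩, hker⟩
      have hdL : X.d ((L y : ↥(BEi i)) : A) = 0 :=
        LinearMap.mem_ker.mp (hBEi_ker i (L y).2)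
      have hdy : X.d (y : A) = 0 := by
        have h1 : X.d (g y) = 0 := LinearMap.mem_ker.mp hker
        rw [hg_apply, map_add, hdL, add_zero] at h1
        exact h1
      have h2 : (y : A) ∈ ZEi i ⊓ Ni i :=
        ⟨⟨⟨LinearMap.mem_ker.mpr hdy, hNle y.2.1⟩, y.2.2⟩, y.2⟩
      rw [hZENi_inf i] at h2
      have hy0 : y = 0 := Subtype.ext ((Submodule.mem_bot ℝ).mp h2)
      rw [Submodule.mem_bot, hg_apply, hy0]
      simp
    · intro y hy
      have h1 : y = g ⟨y, hy⟩ - ((L ⟨y, hy⟩ : ↥(BEi i)) : A) := by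
        rw [hg_apply]; abel
      rw [h1]
      exact Submodule.sub_mem _ (Submodule.mem_sup_left ⟨⟨y, hy⟩, rfl⟩)
        (Submodule.mem_sup_right (L ⟨y, hy⟩).2)
    · rintro x ⟨y, rfl⟩
      refine ⟨(y : A), y.2, ((L y : ↥(BEi i)) : A), (L y).2, hg_apply y, ?_⟩
      intro z hz
      have hcomp : ∀ k, X.pair (p X k z) ((L y : ↥(BEi i)) : A) =
          -(2⁻¹ : ℝ) * X.pair (p X k z) (y : A) := by
        intro k
        by_cases hk : k = j
        · subst hk
          exact hLspec y ⟨p X j z, ⟨hNhomo z hz j, p_mem X j z⟩⟩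
        · have h1 : X.pair (p X k z) ((L y : ↥(BEi i)) : A) = 0 :=
            X.pair_degree k i (by omega) _ (p_mem X k z) _ (hBEi_grading i (L y).2)
          have h2 : X.pair (p X k z) ((y : A)) = 0 :=
            X.pair_degree k i (by omega) _ (p_mem X k z) _ y.2.2
          rw [h1, h2, mul_zero]
      have e0 : X.pair z (((L y : ↥(BEi i)) : A) + (2⁻¹ : ℝ) • (y : A)) = 0 := by
        apply pair_zero_left X
        intro k
        rw [map_add, map_smul, smul_eq_mul, hcomp k]
        ring
      rw [map_add, map_smul, smul_eq_mul] at e0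
      linarith [e0]
    · intro z
      set φ : Module.Dual ℝ ↥(Ni j) := (X.pair.flip z).domRestrict (Ni j) with hφ
      obtain ⟨b, hb⟩ := hΦbij.2 φ
      refine ⟨(b : A), b.2, ?_⟩
      intro y hy
      have h1 := DFunLike.congr_fun hb ⟨y, hy⟩
      rw [hΦ, toDualResF_apply] at h1
      rw [h1, hφ]
      rfl
  choose Cfun hC1 hC2 hC3 hC4 hC5 using key
  set CE : Submodule ℝ A := ⨆ i, Cfun i with hCEdef
  have hCile : ∀ i, Cfun i ≤ X.grading i := fun i => (hC1 i).trans inf_le_right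
  have hCiE : ∀ i, Cfun i ≤ E := fun i => (hC1 i).trans inf_le_left
  have hCEhomo : Homo X CE := homo_iSup X hCile
  have hCEle : CE ≤ E := iSup_le hCiE
  set ZD : Submodule ℝ A := LinearMap.ker X.d ⊓ D with hZDdef
  have hZDhomo : Homo X ZD := homo_inf X (homo_ker_d X) hDhomo
  obtain ⟨CD, hCDle, hCDinf, hCDsup, hCDhomo⟩ :=
    exists_graded_compl X hZDhomo hDhomo inf_le_right
  set C : Submodule ℝ A := CD ⊔ CE with hCdef
  have hChomo : Homo X C := homo_sup X hCDhomo hCEhomo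
  set H : Submodule ℝ A := (LinearMap.ker X.d ⊓ E) ⊓ X.perp C with hHdef
  have hHhomo : Homo X H :=
    homo_inf X (homo_inf X (homo_ker_d X) hEhomo) (homo_perp X hChomo)
  have hHker : H ≤ LinearMap.ker X.d := le_trans inf_le_left inf_le_left
  have hHperp : ∀ h ∈ H, ∀ c ∈ C, X.pair h c = 0 := fun h hh c hc => hh.2 c hc
  refine ⟨H, C, le_top, le_top, gradedOfHomo X hHhomo, gradedOfHomo X hChomo, hHker,
    ?_, ?_, ?_, ?_, ?_, ?_⟩
  · -- H ⊓ map d ⊤ = ⊥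
    rw [Submodule.map_top, eq_bot_iff]
    intro x hx
    rw [Submodule.mem_bot]
    have main : ∀ k : ℤ, ∀ v, v ∈ H → v ∈ LinearMap.range X.d → v ∈ X.grading k →
        v = 0 := by
      intro k v hvH hvR hvg
      obtain ⟨a, rfl⟩ := hvR
      have ha1 : a ∈ E ⊔ D := by rw [hEDsup]; trivial
      rcases Submodule.mem_sup.mp ha1 with ⟨e, he, u, hu, rfl⟩
      have hde : X.d (e + u) = X.d e := by
        have h1 : X.d (e + u) - X.d e ∈ E ⊓ D := by
          constructor
          · exact Submodule.sub_mem _ hvH.1.2 (hEd e he)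
          · rw [map_add]
            have h2 : X.d e + X.d u - X.d e = X.d u := by abel
            rw [h2]
            exact d_degSub X hu
        rw [hEDinf] at h1
        exact sub_eq_zero.mp ((Submodule.mem_bot ℝ).mp h1)
      have he1 : e ∈ ZE ⊔ N := by rw [hNsup]; exact he
      rcases Submodule.mem_sup.mp he1 with ⟨z, hz, w, hw, hzw⟩
      have hdew : X.d e = X.d w := by
        rw [← hzw, map_add, LinearMap.mem_ker.mp hz.1, zero_add]
      have hveq : X.d (e + u) = X.d (p X (k-1) w) := by
        conv_lhs => rw [← p_same X hvg]
        rw [hde, hdew, p_comm_d']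
      have hw' : p X (k-1) w ∈ Ni (k-1) := ⟨hNhomo w hw (k-1), p_mem X (k-1) w⟩
      have hvH' : X.d (p X (k-1) w) ∈ H := by rw [← hveq]; exact hvH
      have hdw0 : X.d (p X (k-1) w) = 0 := by
        have hmem : X.d (p X (k-1) w) ∈ Ei k :=
          ⟨hEd _ (hNle hw'.1), grading_cast X (by omega) (X.d_degree _ _ hw'.2)⟩
        refine nd k (X.n - k) (by omega) _ hmem ?_
        intro y hy
        have hy1 : y ∈ ZEi (X.n - k) ⊔ Ni (X.n - k) := by
          rw [hEi_split]; exact hy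
        rcases Submodule.mem_sup.mp hy1 with ⟨z1, hz1, y2, hy2, rfl⟩
        have hp1 : X.pair (X.d (p X (k-1) w)) z1 = 0 :=
          pair_d_ker X (LinearMap.mem_ker.mp (hZEiker _ hz1)) _
        have hy2' : y2 ∈ Cfun (X.n - k) ⊔ BEi (X.n - k) := hC3 _ hy2
        rcases Submodule.mem_sup.mp hy2' with ⟨c, hc, b2, hb2, rfl⟩
        have hp2 : X.pair (X.d (p X (k-1) w)) c = 0 :=
          hvH'.2 c (Submodule.mem_sup_right (Submodule.mem_iSup_of_mem _ hc))
        have hp3 : X.pair (X.d (p X (k-1) w)) b2 = 0 := by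
          obtain ⟨s, _, rfl⟩ := hb2
          exact pair_d_ker X (X.d_sq s) _
        rw [map_add, map_add, hp1, hp2, hp3, add_zero, add_zero]
      rw [hveq, hdw0]
    apply eq_zero_of_p X
    intro k
    exact main k _ (hHhomo x hx.1 k) ((homo_range_d X) x hx.2 k) (p_mem X k x)
  · -- H ⊔ map d ⊤ = ker d ⊓ ⊤
    rw [Submodule.map_top, inf_top_eq]
    apply le_antisymm
    · apply sup_le hHker
      rintro x ⟨a, rfl⟩
      exact LinearMap.mem_ker.mpr (X.d_sq a)
    · intro x hx
      have hx1 : x ∈ E ⊔ D := by rw [hEDsup]; trivial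
      rcases Submodule.mem_sup.mp hx1 with ⟨e, he, u, hu, rfl⟩
      have hdx : X.d (e + u) = 0 := LinearMap.mem_ker.mp hx
      have hde : X.d e = 0 := by
        have h1 : X.d e ∈ E ⊓ D := by
          constructor
          · exact hEd e he
          · have h2 : X.d e = - X.d u := by
              rw [map_add] at hdx
              exact eq_neg_of_add_eq_zero_left hdx
            rw [h2]
            exact Submodule.neg_mem _ (d_degSub X hu)
        rw [hEDinf] at h1
        exact (Submodule.mem_bot ℝ).mp h1
      have hdu : X.d u = 0 := by
        rw [map_add, hde, zero_add] at hdx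
        exact hdx
      apply Submodule.add_mem
      · apply mem_of_p X
        intro m
        have hpm : p X m e ∈ ZEi m :=
          ⟨hZEhomo e ⟨LinearMap.mem_ker.mpr hde, he⟩ m, p_mem X m e⟩
        obtain ⟨b, hbB, hbprop⟩ := hC5 m (p X m e)
        have hdzb : X.d (p X m e - b) = 0 := by
          rw [map_sub, LinearMap.mem_ker.mp (hZEiker m hpm),
            LinearMap.mem_ker.mp (hBEi_ker m hbB), sub_zero]
        have hzbg : p X m e - b ∈ X.grading m :=
          Submodule.sub_mem _ hpm.2 (hBEi_grading m hbB)
        have hzb : p X m e - b ∈ H := by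
          refine ⟨⟨LinearMap.mem_ker.mpr hdzb,
            Submodule.sub_mem _ (hZEiE m hpm).1 (hBEi_E m hbB)⟩, ?_⟩
          intro c hc
          rcases Submodule.mem_sup.mp hc with ⟨c1, hc1, c2, hc2, rfl⟩
          have hq1 : X.pair (p X m e - b) c1 = 0 :=
            pair_degSub_right X (hCDle hc1) _
          have hq2 : X.pair (p X m e - b) c2 = 0 := by
            apply pair_zero_right X
            intro k
            have hk : p X k c2 ∈ Cfun k := p_mem_of_iSup X hCile hc2 k
            obtain ⟨y, hy, b2, hb2, heq, _hprop⟩ := hC4 k _ hk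
            rw [heq]
            have hq3 : X.pair (p X m e - b) b2 = 0 := by
              obtain ⟨s, _, rfl⟩ := hb2
              exact pair_ker_d X hdzb s
            have hq4 : X.pair (p X m e - b) y = 0 := by
              by_cases hkm : m + k = X.n
              · have hkk : k = X.n - m := by omega
                subst hkk
                have hsym := X.pair_symm m (X.n - m) _ hzbg y hy.2
                rw [hsym]
                have h5 : X.pair y (p X m e - b) = 0 := by
                  rw [map_sub, hbprop y hy, sub_self]
                rw [h5, mul_zero]
              · exact X.pair_degree m k hkm _ hzbg _ hy.2
            rw [map_add, hq4, hq3, add_zero]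
          rw [map_add, hq1, hq2, add_zero]
        have hsplit : p X m e = (p X m e - b) + b := by abel
        rw [hsplit]
        apply Submodule.add_mem
        · exact Submodule.mem_sup_left hzb
        · obtain ⟨s, _, rfl⟩ := hbB
          exact Submodule.mem_sup_right ⟨s, rfl⟩
      · obtain ⟨zz, _hzz, hueq⟩ := hacyclic u hu hdu
        rw [hueq]
        exact Submodule.mem_sup_right ⟨zz, rfl⟩
  · -- C ⊓ ker d = ⊥
    rw [eq_bot_iff]
    intro x hx
    rw [Submodule.mem_bot]
    rcases Submodule.mem_sup.mp hx.1 with ⟨c1, hc1, c2, hc2, hceq⟩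
    have hdx : X.d x = 0 := LinearMap.mem_ker.mp hx.2
    have hd12 : X.d c1 + X.d c2 = 0 := by rw [← map_add, hceq, hdx]
    have hdc1 : X.d c1 = 0 := by
      have h1 : X.d c1 ∈ E ⊓ D := by
        constructor
        · have h2 : X.d c1 = - X.d c2 := eq_neg_of_add_eq_zero_left hd12
          rw [h2]
          exact Submodule.neg_mem _ (hEd c2 (hCEle hc2))
        · exact d_degSub X (hCDle hc1)
      rw [hEDinf] at h1
      exact (Submodule.mem_bot ℝ).mp h1
    have hc10 : c1 = 0 := by
      have h1 : c1 ∈ ZD ⊓ CD := ⟨⟨LinearMap.mem_ker.mpr hdc1, hCDle hc1⟩, hc1⟩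
      rw [hCDinf] at h1
      exact (Submodule.mem_bot ℝ).mp h1
    have hdc2 : X.d c2 = 0 := by rw [hdc1, zero_add] at hd12; exact hd12
    have hc20 : c2 = 0 := by
      apply eq_zero_of_p X
      intro k
      have h1 : p X k c2 ∈ Cfun k ⊓ LinearMap.ker X.d := by
        refine ⟨p_mem_of_iSup X hCile hc2 k, LinearMap.mem_ker.mpr ?_⟩
        rw [← p_comm_d X k c2, hdc2, map_zero]
      rw [hC2 k] at h1
      exact (Submodule.mem_bot ℝ).mp h1
    rw [← hceq, hc10, hc20, add_zero]
  · -- C ⊔ (ker d ⊓ ⊤) = ⊤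
    rw [inf_top_eq, eq_top_iff]
    intro x _
    have hx1 : x ∈ E ⊔ D := by rw [hEDsup]; trivial
    rcases Submodule.mem_sup.mp hx1 with ⟨e, he, u, hu, rfl⟩
    apply Submodule.add_mem
    · have he1 : e ∈ ZE ⊔ N := by rw [hNsup]; exact he
      rcases Submodule.mem_sup.mp he1 with ⟨z, hz, w, hw, rfl⟩
      apply Submodule.add_mem
      · exact Submodule.mem_sup_right hz.1
      · apply mem_of_p X
        intro m
        have h1 : p X m w ∈ Ni m := ⟨hNhomo w hw m, p_mem X m w⟩
        have h2 := hC3 m h1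
        rcases Submodule.mem_sup.mp h2 with ⟨c, hc, b, hb, hbeq⟩
        rw [← hbeq]
        apply Submodule.add_mem
        · exact Submodule.mem_sup_left
            (Submodule.mem_sup_right (Submodule.mem_iSup_of_mem m hc))
        · exact Submodule.mem_sup_right (hBEi_ker m hb)
    · have hu1 : u ∈ ZD ⊔ CD := by rw [hCDsup]; exact hu
      rcases Submodule.mem_sup.mp hu1 with ⟨z, hz, c, hc, hceq⟩
      rw [← hceq]
      exact Submodule.add_mem _ (Submodule.mem_sup_right hz.1)
        (Submodule.mem_sup_left (Submodule.mem_sup_left hc))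
  · -- isotropy of C
    intro c hc c' hc'
    rcases Submodule.mem_sup.mp hc with ⟨c1, hc1, c2, hc2, hceq⟩
    rcases Submodule.mem_sup.mp hc' with ⟨c1', hc1', c2', hc2', hceq'⟩
    have h2 : X.pair c2 c1' = 0 := pair_degSub_right X (hCDle hc1') c2
    have h3 : X.pair c2 c2' = 0 := by
      apply pair_zero_left X
      intro k
      apply pair_zero_right X
      intro m
      have hk : p X k c2 ∈ Cfun k := p_mem_of_iSup X hCile hc2 k
      have hm : p X m c2' ∈ Cfun m := p_mem_of_iSup X hCile hc2' m
      by_cases hkm : k + m = X.n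
      · obtain ⟨y, hy, b, hb, heq, hprop⟩ := hC4 k _ hk
        obtain ⟨y', hy', b', hb', heq', hprop'⟩ := hC4 m _ hm
        rw [heq, heq']
        have hsym : X.pair y y' = (-1:ℝ)^(k*m) * X.pair y' y :=
          X.pair_symm k m y hy.2 y' hy'.2
        have t1 : X.pair y b' = -(2⁻¹:ℝ) * X.pair y y' := hprop' y hy.1
        have t2 : X.pair b y' = -(2⁻¹:ℝ) * X.pair y y' := by
          have hs1 : X.pair b y' = (-1:ℝ)^(k*m) * X.pair y' b :=
            X.pair_symm k m b (hBEi_grading k hb) y' hy'.2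
          have hs2 : X.pair y' b = -(2⁻¹:ℝ) * X.pair y' y := hprop y' hy'.1
          rw [hs1, hs2, hsym]
          ring
        have t3 : X.pair b b' = 0 := by
          obtain ⟨s, _, rfl⟩ := hb
          obtain ⟨s', _, rfl⟩ := hb'
          exact pair_d_ker X (X.d_sq s') s
        have expand : X.pair (y + b) (y' + b') =
            X.pair y y' + X.pair y b' + (X.pair b y' + X.pair b b') := by
          simp only [map_add, LinearMap.add_apply]
          ring
        rw [expand, t1, t2, t3]
        ring
      · exact X.pair_degree k m hkm _ (p_mem X k c2) _ (p_mem X m c2')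
    rw [← hceq, ← hceq']
    simp only [map_add, LinearMap.add_apply]
    rw [pair_degSub_left X (hCDle hc1) c1', pair_degSub_left X (hCDle hc1) c2', h2, h3]
    ring
  · -- C ⊥ H
    intro c hc h hh
    exact pair_flip X hHhomo hChomo hHperp c hc h hh

end Stmt10Aux


section Statements

variable {A B : Type*} [AddCommGroup A] [Module ℝ A] [AddCommGroup B] [Module ℝ B]
/-- if `A_deg` is acyclic and the nondegenerate quotient is of finite
type, then `A` is of Hodge type. -/
theorem stmt10 (X : PairedComplex A)
    (hacyclic : ∀ x ∈ X.degSub, X.d x = 0 → ∃ z ∈ X.degSub, x = X.d z)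
    (hfin : ∀ i : ℤ, FiniteDimensional ℝ
      (↥(X.grading i) ⧸ (X.degSub.comap (X.grading i).subtype))) :
    X.IsHodgeType := by
  letI := X.internal.chooseDecomposition
  exact Stmt10Aux.isHodge_of_hyps X hacyclic hfin

end Statements
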